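/- Let G be a group, A a finite nonempty subset with |A²| ≤ K|A| (K ≥ 1), and k a positive integer. Then there exists a symmetric neighbourhood of the identity S (1 ∈ S, S = S⁻¹) with S^k ⊆ A²A⁻² and |S| ≥ exp(-K^{Ck})|A| for some absolute constant C > 0. -/

import Mathlib

open Finset Pointwise

section SandersProof

variable {G : Type} [Group G] [DecidableEq G]


private lemma subadd (u v : G) (X : Finset G) :
    (u • X ∩ X).card + (v • X ∩ X).card ≤ ((u * v) • X ∩ X).card + X.card := by
  have e1 : (u * v) • X ∩ u • X = u • (v • X ∩ X) := by
    rw [smul_finset_inter, ← mul_smul]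
  have hu : ((u * v) • X ∩ u • X) ∪ (u • X ∩ X) ⊆ u • X := by
    intro y hy
    rcases mem_union.1 hy with h | h
    · exact (mem_inter.1 h).2
    · exact (mem_inter.1 h).1
  have hi : ((u * v) • X ∩ u • X) ∩ (u • X ∩ X) ⊆ (u * v) • X ∩ X := by
    intro y hy
    simp only [mem_inter] at hy ⊢
    exact ⟨hy.1.1, hy.2.2⟩
  have e2 : (v • X ∩ X).card = ((u * v) • X ∩ u • X).card := by
    rw [e1, card_smul_finset]
  calc (u • X ∩ X).card + (v • X ∩ X).card
      = ((u * v) • X ∩ u • X).card + (u • X ∩ X).card := by rw [e2]; ring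
    _ = (((u * v) • X ∩ u • X) ∪ (u • X ∩ X)).card
        + (((u * v) • X ∩ u • X) ∩ (u • X ∩ X)).card :=
          (card_union_add_card_inter _ _).symm
    _ ≤ (u • X).card + ((u * v) • X ∩ X).card :=
          add_le_add (card_le_card hu) (card_le_card hi)
    _ = ((u * v) • X ∩ X).card + X.card := by rw [card_smul_finset]; ring

private lemma mem_of_inter_ne (g : G) (X : Finset G) (h : (g • X ∩ X).Nonempty) :
    g ∈ X * X⁻¹ := by
  obtain ⟨y, hy⟩ := h
  have h1 := (mem_inter.1 hy).1
  have h2 := (mem_inter.1 hy).2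
  obtain ⟨x, hx, hgx⟩ := mem_smul_finset.1 h1
  refine mem_mul.2 ⟨y, h2, x⁻¹, mem_inv'.2 (by simpa using hx), ?_⟩
  have : g * x = y := hgx
  group
  rw [← this]
  group

private lemma card_le_mul_left (A : Finset G) {B : Finset G} (hB : B.Nonempty) :
    A.card ≤ (B * A).card := by
  obtain ⟨b, hb⟩ := hB
  calc A.card = (b • A).card := (card_smul_finset b A).symm
    _ ≤ (B * A).card := card_le_card (smul_finset_subset_smul hb)


private lemma pow_bound (k : ℕ) (X : Finset G) (j : ℕ) :
    ∀ g ∈ ((X * X⁻¹).filter fun g => k * X.card ≤ (k + 1) * ((g • X) ∩ X).card) ^ j,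
      (k + 1) * X.card ≤ (k + 1) * ((g • X) ∩ X).card + j * X.card := by
  induction j with
  | zero =>
      intro g hg
      rw [pow_zero, mem_one] at hg
      subst hg
      simp [one_smul]
  | succ j ih =>
      intro g hg
      rw [pow_succ, mem_mul] at hg
      obtain ⟨u, hu, v, hv, rfl⟩ := hg
      have h1 := ih u hu
      have h2 := (mem_filter.1 hv).2
      have h3 := subadd u v X
      have h3' : (k + 1) * ((u • X ∩ X).card + (v • X ∩ X).card)
          ≤ (k + 1) * (((u * v) • X ∩ X).card + X.card) := Nat.mul_le_mul_left _ h3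
      rw [Nat.mul_add, Nat.mul_add] at h3'
      have e1 : (k + 1) * X.card = k * X.card + X.card := by ring
      have e2 : (j + 1) * X.card = j * X.card + X.card := by ring
      linarith

private lemma goodS (k : ℕ) (hk : 0 < k) (X : Finset G) (hXne : X.Nonempty) :
    (1 : G) ∈ ((X * X⁻¹).filter fun g => k * X.card ≤ (k + 1) * ((g • X) ∩ X).card) ∧
    ((X * X⁻¹).filter fun g => k * X.card ≤ (k + 1) * ((g • X) ∩ X).card)⁻¹
      = ((X * X⁻¹).filter fun g => k * X.card ≤ (k + 1) * ((g • X) ∩ X).card) ∧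
    ((X * X⁻¹).filter fun g => k * X.card ≤ (k + 1) * ((g • X) ∩ X).card) ^ k ⊆ X * X⁻¹ := by
  have hinvmem : ∀ h : G, h ∈ X * X⁻¹ → h⁻¹ ∈ X * X⁻¹ := by
    intro h hh
    obtain ⟨y, hy, z, hz, rfl⟩ := mem_mul.1 hh
    have : (y * z)⁻¹ = z⁻¹ * y⁻¹ := by group
    rw [this]
    exact mul_mem_mul (mem_inv'.1 hz) (mem_inv'.2 (by simpa using hy))
  have hPcard : ∀ h : G, ((h⁻¹ • X) ∩ X).card = ((h • X) ∩ X).card := by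
    intro h
    have e : (h⁻¹ • X) ∩ X = h⁻¹ • (X ∩ h • X) := by
      rw [smul_finset_inter, inv_smul_smul]
    rw [e, card_smul_finset, inter_comm]
  refine ⟨?_, ?_, ?_⟩
  · refine mem_filter.2 ⟨?_, ?_⟩
    · obtain ⟨x, hx⟩ := hXne
      have : (1 : G) = x * x⁻¹ := by group
      rw [this]
      exact mul_mem_mul hx (mem_inv'.2 (by simpa using hx))
    · rw [one_smul, inter_self]
      exact Nat.mul_le_mul_right _ (Nat.le_succ k)
  · ext g
    rw [mem_inv']
    simp only [mem_filter]
    constructor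
    · rintro ⟨hm, hp⟩
      refine ⟨by simpa using hinvmem _ hm, ?_⟩
      rw [← hPcard g]
      exact hp
    · rintro ⟨hm, hp⟩
      refine ⟨hinvmem _ hm, ?_⟩
      rw [hPcard g]
      exact hp
  · intro g hg
    have h := pow_bound k X k g hg
    have hn : 0 < X.card := card_pos.2 hXne
    have ha : 0 < ((g • X) ∩ X).card := by
      rcases Nat.eq_zero_or_pos ((g • X) ∩ X).card with h0 | h0
      · rw [h0, Nat.mul_zero, Nat.zero_add] at h
        have h' : k * X.card + X.card ≤ k * X.card := by
          calc k * X.card + X.card = (k + 1) * X.card := by ring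
            _ ≤ k * X.card := h
        omega
      · exact h0
    exact mem_of_inter_ne g X (card_pos.1 ha)


private lemma counting (B : Finset G) :
    B.card * B.card = ∑ x ∈ B * B⁻¹, (B ∩ x • B).card := by
  have hmem : ∀ p ∈ B ×ˢ B, (fun p : G × G => p.1 * p.2⁻¹) p ∈ B * B⁻¹ := by
    intro p hp
    rw [mem_product] at hp
    exact mul_mem_mul hp.1 (mem_inv'.2 (by simpa using hp.2))
  have h := card_eq_sum_card_fiberwise hmem
  rw [card_product] at h
  rw [h]
  refine sum_congr rfl ?_
  intro x hx
  refine card_bij (fun p _ => p.1) ?_ ?_ ?_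
  · intro p hp
    rw [mem_filter, mem_product] at hp
    refine mem_inter.2 ⟨hp.1.1, ?_⟩
    refine mem_smul_finset.2 ⟨p.2, hp.1.2, ?_⟩
    show x • p.2 = p.1
    have he : p.1 * p.2⁻¹ = x := hp.2
    rw [smul_eq_mul, ← he]
    group
  · intro p hp q hq he
    rw [mem_filter] at hp hq
    have he' : p.1 = q.1 := he
    have h1 : p.1 * p.2⁻¹ = x := hp.2
    have h2 : q.1 * q.2⁻¹ = x := hq.2
    have h22 : p.2 = q.2 := by
      rw [← he'] at h2
      have := h1.trans h2.symm
      exact inv_injective (mul_left_cancel this)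
    exact Prod.ext he' h22
  · intro b hb
    rw [mem_inter] at hb
    obtain ⟨c, hc, hxc⟩ := mem_smul_finset.1 hb.2
    refine ⟨(b, c), ?_, rfl⟩
    rw [mem_filter, mem_product]
    refine ⟨⟨hb.1, hc⟩, ?_⟩
    have : x * c = b := hxc
    rw [← this]
    group

private lemma ruzsa (A B : Finset G) :
    (B * B⁻¹).card * A.card ≤ (B * A).card * (B * A).card := by
  classical
  rw [← card_product, ← card_product]
  set f : G → G × G := fun x =>
    if h : ∃ p : G × G, p.1 ∈ B ∧ p.2 ∈ B ∧ x = p.1 * p.2⁻¹ then h.choose else (1, 1) with hf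
  have hfspec : ∀ x ∈ B * B⁻¹, (f x).1 ∈ B ∧ (f x).2 ∈ B ∧ x = (f x).1 * (f x).2⁻¹ := by
    intro x hx
    obtain ⟨b, hb, c, hc, he⟩ := mem_mul.1 hx
    have hex : ∃ p : G × G, p.1 ∈ B ∧ p.2 ∈ B ∧ x = p.1 * p.2⁻¹ := by
      refine ⟨(b, c⁻¹), hb, mem_inv'.1 hc, ?_⟩
      rw [inv_inv]
      exact he.symm
    rw [hf]
    simp only [dif_pos hex]
    exact hex.choose_spec
  apply card_le_card_of_injOn (fun q : G × G => ((f q.1).1 * q.2, (f q.1).2 * q.2))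
  · intro q hq
    rw [mem_coe, mem_product] at hq ⊢
    obtain ⟨h1, h2, _⟩ := hfspec q.1 hq.1
    exact ⟨mul_mem_mul h1 hq.2, mul_mem_mul h2 hq.2⟩
  · intro q hq q' hq' he
    simp only [Finset.mem_coe, mem_product] at hq hq'
    obtain ⟨_, _, h3⟩ := hfspec q.1 hq.1
    obtain ⟨_, _, h3'⟩ := hfspec q'.1 hq'.1
    have e1 : (f q.1).1 * q.2 = (f q'.1).1 * q'.2 := congrArg Prod.fst he
    have e2 : (f q.1).2 * q.2 = (f q'.1).2 * q'.2 := congrArg Prod.snd he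
    have hx : q.1 = q'.1 := by
      rw [h3, h3']
      calc (f q.1).1 * (f q.1).2⁻¹
          = ((f q.1).1 * q.2) * ((f q.1).2 * q.2)⁻¹ := by group
        _ = ((f q'.1).1 * q'.2) * ((f q'.1).2 * q'.2)⁻¹ := by rw [e1, e2]
        _ = (f q'.1).1 * (f q'.1).2⁻¹ := by group
    have hq2 : q.2 = q'.2 := by
      rw [hx] at e1
      exact mul_left_cancel e1
    exact Prod.ext hx hq2


set_option maxHeartbeats 1000000 in
private lemma claim {A : Finset G} {K : ℝ} {k : ℕ} (hA : A.Nonempty) (hK : 1 ≤ K)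
    (hAA : ((A * A).card : ℝ) ≤ K * A.card) (hk : 0 < k) :
    ∀ r : ℕ, ∀ γ : ℝ, 0 < γ → γ ≤ 1 → ∀ B : Finset G, B ⊆ A → B.Nonempty →
      γ * A.card ≤ (B.card : ℝ) →
      ((k : ℝ) / (k + 1)) ^ r * ((B * A).card : ℝ) < A.card →
      ∃ S : Finset G, (1 : G) ∈ S ∧ S⁻¹ = S ∧ S ^ k ⊆ A * A * (A * A)⁻¹ ∧
        γ ^ (2 ^ (r - 1)) * A.card / (2 * (2 * K ^ 2) ^ (2 ^ (r - 1) - 1)) ≤ (S.card : ℝ) := by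
  intro r
  induction r with
  | zero =>
      intro γ hγ hγ1 B hBA hBne hcard hlt
      exfalso
      have h1 : (A.card : ℝ) ≤ ((B * A).card : ℝ) := by
        exact_mod_cast card_le_mul_left A hBne
      rw [pow_zero, one_mul] at hlt
      linarith
  | succ r ih =>
      intro γ hγ hγ1 B hBA hBne hcard hlt
      have hA0 : (0 : ℝ) < A.card := by exact_mod_cast card_pos.2 hA
      have hB0 : (0 : ℝ) < B.card := by exact_mod_cast card_pos.2 hBne
      have hK0 : (0 : ℝ) < K := lt_of_lt_of_le one_pos hK
      have h2K : (1 : ℝ) ≤ 2 * K ^ 2 := by nlinarith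
      have hXne : (B * A).Nonempty := hBne.mul hA
      set X := B * A with hXdef
      have hXAA : X ⊆ A * A := mul_subset_mul_right hBA
      have hXXsub : X * X⁻¹ ⊆ A * A * (A * A)⁻¹ :=
        mul_subset_mul hXAA (inv_subset_inv hXAA)
      have hXBA : (x : G) → ((x • B) * A = x • X) := fun x => smul_mul_assoc x B A
      obtain ⟨hS1, hSinv, hSpow⟩ := goodS k hk X hXne
      clear_value X
      set M := (B * B⁻¹).card with hMdef
      have hMpos : 0 < M := card_pos.2 (hBne.mul hBne.inv)
      have hruzsa : M * A.card ≤ (B * A).card * (B * A).card := ruzsa A B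
      clear_value M
      set T := (B * B⁻¹).filter (fun x => B.card ^ 2 ≤ 2 * M * ((B ∩ x • B).card)) with hTdef
      clear_value T
      by_cases hcase : ∀ x ∈ T, k * X.card ≤ (k + 1) * ((x • X) ∩ X).card
      · -- success case
        have hTS : T ⊆ (X * X⁻¹).filter
            (fun g => k * X.card ≤ (k + 1) * ((g • X) ∩ X).card) := by
          intro x hx
          have hx' := hx
          rw [hTdef, mem_filter] at hx'
          have hxB := hx'.1
          refine mem_filter.2 ⟨?_, hcase x hx⟩
          obtain ⟨b, hb, c, hc, rfl⟩ := mem_mul.1 hxB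
          obtain ⟨a, ha⟩ := hA
          have h1 : b * a ∈ X := by rw [hXdef]; exact mul_mem_mul hb ha
          have h2 : c⁻¹ * a ∈ X := by rw [hXdef]; exact mul_mem_mul (mem_inv'.1 hc) ha
          have he : b * c = (b * a) * (c⁻¹ * a)⁻¹ := by group
          rw [he]
          exact mul_mem_mul h1 (mem_inv'.2 (by simpa using h2))
        have hcnt : (B.card : ℝ) * B.card = ∑ x ∈ B * B⁻¹, ((B ∩ x • B).card : ℝ) := by
          exact_mod_cast counting B
        have hsplit := sum_filter_add_sum_filter_not (B * B⁻¹)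
          (fun x => B.card ^ 2 ≤ 2 * M * ((B ∩ x • B).card))
          (fun x => ((B ∩ x • B).card : ℝ))
        set N := (B * B⁻¹).filter
          (fun x => ¬ B.card ^ 2 ≤ 2 * M * ((B ∩ x • B).card)) with hNdef
        clear_value N
        have hTbound : ∑ x ∈ T, ((B ∩ x • B).card : ℝ) ≤ (T.card : ℝ) * B.card := by
          calc ∑ x ∈ T, ((B ∩ x • B).card : ℝ) ≤ ∑ _x ∈ T, (B.card : ℝ) := by
                refine sum_le_sum ?_
                intro i _
                exact_mod_cast card_le_card inter_subset_left
            _ = T.card * B.card := by rw [sum_const, nsmul_eq_mul]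
        have hM0 : (0 : ℝ) < M := by exact_mod_cast hMpos
        have hNbound : ∑ x ∈ N, ((B ∩ x • B).card : ℝ) ≤ (B.card : ℝ) ^ 2 / 2 := by
          have hper : ∀ x ∈ N, ((B ∩ x • B).card : ℝ) ≤ (B.card : ℝ) ^ 2 / (2 * M) := by
            intro x hx
            rw [hNdef, mem_filter] at hx
            have h' : 2 * M * ((B ∩ x • B).card) < B.card ^ 2 := not_le.mp hx.2
            have h'' : 2 * (M : ℝ) * ((B ∩ x • B).card : ℝ) ≤ (B.card : ℝ) ^ 2 := by
              exact_mod_cast le_of_lt h'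
            rw [le_div_iff₀ (by positivity)]
            linarith
          calc ∑ x ∈ N, ((B ∩ x • B).card : ℝ)
              ≤ N.card • ((B.card : ℝ) ^ 2 / (2 * M)) := sum_le_card_nsmul _ _ _ hper
            _ = N.card * ((B.card : ℝ) ^ 2 / (2 * M)) := by rw [nsmul_eq_mul]
            _ ≤ (M : ℝ) * ((B.card : ℝ) ^ 2 / (2 * M)) := by
                refine mul_le_mul_of_nonneg_right ?_ (by positivity)
                have hNM : N.card ≤ M := by
                  rw [hNdef, hMdef]; exact card_le_card (filter_subset _ _)
                exact_mod_cast hNM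
            _ = (B.card : ℝ) ^ 2 / 2 := by field_simp
        have hhalf : (B.card : ℝ) / 2 ≤ T.card := by
          rw [← hTdef] at hsplit
          have hBB : (B.card : ℝ) ^ 2 = (B.card : ℝ) * B.card := sq (B.card : ℝ)
          have htot : (B.card : ℝ) ^ 2 ≤ (T.card : ℝ) * B.card + (B.card : ℝ) ^ 2 / 2 := by
            linarith [hsplit, hTbound, hNbound, hcnt, hBB]
          nlinarith [htot, hB0]
        refine ⟨_, hS1, hSinv, Finset.Subset.trans hSpow hXXsub, ?_⟩
        have hST : (T.card : ℝ) ≤ (((X * X⁻¹).filter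
            (fun g => k * X.card ≤ (k + 1) * ((g • X) ∩ X).card)).card : ℝ) := by
          exact_mod_cast card_le_card hTS
        have hE1 : (1 : ℝ) ≤ (2 * K ^ 2) ^ (2 ^ ((r + 1) - 1) - 1) := one_le_pow₀ h2K
        have hstep1 : γ ^ (2 ^ ((r + 1) - 1)) * (A.card : ℝ)
            / (2 * (2 * K ^ 2) ^ (2 ^ ((r + 1) - 1) - 1)) ≤ γ * A.card / 2 := by
          apply div_le_div₀ (by positivity) ?_ (by norm_num) ?_
          · refine mul_le_mul_of_nonneg_right ?_ (le_of_lt hA0)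
            exact pow_le_of_le_one (le_of_lt hγ) hγ1 (by positivity)
          · nlinarith
        calc γ ^ (2 ^ ((r + 1) - 1)) * (A.card : ℝ)
            / (2 * (2 * K ^ 2) ^ (2 ^ ((r + 1) - 1) - 1)) ≤ γ * A.card / 2 := hstep1
          _ ≤ (B.card : ℝ) / 2 := by linarith
          _ ≤ T.card := hhalf
          _ ≤ _ := hST
      · -- increment case
        push_neg at hcase
        obtain ⟨x, hxT, hxS⟩ := hcase
        rw [hTdef, mem_filter] at hxT
        have hxB := hxT.1
        have hxcnt : B.card ^ 2 ≤ 2 * M * ((B ∩ x • B).card) := hxT.2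
        have hxbad : (k + 1) * ((x • X) ∩ X).card < k * X.card := hxS
        have hBAcard : ((B * A).card : ℝ) ≤ K * A.card := by
          have h := card_le_card (mul_subset_mul_right hBA (t := A))
          calc ((B * A).card : ℝ) ≤ ((A * A).card : ℝ) := by exact_mod_cast h
            _ ≤ K * A.card := hAA
        have hMK : (M : ℝ) ≤ K ^ 2 * A.card := by
          have h2 : ((M : ℕ) : ℝ) * A.card ≤ ((B * A).card : ℝ) * (B * A).card := by
            exact_mod_cast hruzsa
          have h3 : ((B * A).card : ℝ) * (B * A).card ≤ (K * A.card) * (K * A.card) := by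
            have h0 : (0 : ℝ) ≤ ((B * A).card : ℝ) := Nat.cast_nonneg _
            nlinarith
          nlinarith
        have hB'c : γ ^ 2 / (2 * K ^ 2) * A.card ≤ ((B ∩ x • B).card : ℝ) := by
          have h1 : (B.card : ℝ) ^ 2 ≤ 2 * M * ((B ∩ x • B).card : ℝ) := by
            exact_mod_cast hxcnt
          have h2 : (γ * A.card) ^ 2 ≤ (B.card : ℝ) ^ 2 :=
            pow_le_pow_left₀ (by positivity) hcard 2
          have hB'0 : (0 : ℝ) ≤ ((B ∩ x • B).card : ℝ) := Nat.cast_nonneg _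
          have h3 : (γ * A.card) ^ 2 ≤ 2 * (K ^ 2 * A.card) * ((B ∩ x • B).card : ℝ) := by
            nlinarith
          rw [div_mul_eq_mul_div, div_le_iff₀ (by positivity)]
          nlinarith
        have hB'ne : (B ∩ x • B).Nonempty := by
          rw [← card_pos]
          have h0 : (0 : ℝ) < ((B ∩ x • B).card : ℝ) :=
            lt_of_lt_of_le (by positivity) hB'c
          exact_mod_cast h0
        have hB'A : B ∩ x • B ⊆ A := inter_subset_left.trans hBA
        have hsub : (B ∩ x • B) * A ⊆ x • X ∩ X := by
          intro y hy
          refine mem_inter.2 ⟨?_, ?_⟩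
          · have h1 : (B ∩ x • B) * A ⊆ (x • B) * A := mul_subset_mul_right inter_subset_right
            rw [← hXBA x]
            exact h1 hy
          · rw [hXdef]
            exact mul_subset_mul_right inter_subset_left hy
        have hcard' : (((B ∩ x • B) * A).card : ℝ) ≤ ((x • X ∩ X).card : ℝ) := by
          exact_mod_cast card_le_card hsub
        have hq0 : (0 : ℝ) < (k : ℝ) / (k + 1) := by positivity
        have hklt : ((x • X ∩ X).card : ℝ) < (k : ℝ) / (k + 1) * X.card := by
          have hc : ((k : ℝ) + 1) * ((x • X ∩ X).card : ℝ) < (k : ℝ) * X.card := by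
            exact_mod_cast hxbad
          rw [div_mul_eq_mul_div, lt_div_iff₀ (by positivity)]
          nlinarith
        have hlt' : ((k : ℝ) / (k + 1)) ^ r * (((B ∩ x • B) * A).card : ℝ) < A.card := by
          have h5 : ((k : ℝ) / (k + 1)) ^ r * (((B ∩ x • B) * A).card : ℝ)
              ≤ ((k : ℝ) / (k + 1)) ^ r * ((x • X ∩ X).card : ℝ) :=
            mul_le_mul_of_nonneg_left hcard' (le_of_lt (pow_pos hq0 r))
          have h6 : ((k : ℝ) / (k + 1)) ^ r * ((x • X ∩ X).card : ℝ)
              < ((k : ℝ) / (k + 1)) ^ (r + 1) * (X.card : ℝ) := by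
            rw [pow_succ]
            calc ((k : ℝ) / (k + 1)) ^ r * ((x • X ∩ X).card : ℝ)
                < ((k : ℝ) / (k + 1)) ^ r * ((k : ℝ) / (k + 1) * X.card) :=
                  mul_lt_mul_of_pos_left hklt (pow_pos hq0 r)
              _ = ((k : ℝ) / (k + 1)) ^ r * ((k : ℝ) / (k + 1)) * (X.card : ℝ) := by ring
          exact lt_of_le_of_lt h5 (lt_of_lt_of_le h6 (le_of_lt hlt))
        rcases Nat.eq_zero_or_pos r with hr0 | hrpos
        · exfalso
          subst hr0
          rw [pow_zero, one_mul] at hlt'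
          have h7 : (A.card : ℝ) ≤ (((B ∩ x • B) * A).card : ℝ) := by
            exact_mod_cast card_le_mul_left A hB'ne
          linarith
        · have hγ'0 : (0 : ℝ) < γ ^ 2 / (2 * K ^ 2) := by positivity
          have hγ'1 : γ ^ 2 / (2 * K ^ 2) ≤ 1 := by
            rw [div_le_one (by positivity)]
            nlinarith
          obtain ⟨S', p1, p2, p3, p4⟩ :=
            ih (γ ^ 2 / (2 * K ^ 2)) hγ'0 hγ'1 (B ∩ x • B) hB'A hB'ne hB'c hlt'
          refine ⟨S', p1, p2, p3, le_trans (le_of_eq ?_) p4⟩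
          have hn1 : 1 ≤ 2 ^ (r - 1) := Nat.one_le_two_pow
          obtain ⟨s, rfl⟩ : ∃ s, r = s + 1 := ⟨r - 1, by omega⟩
          set n := 2 ^ ((s + 1) - 1) with hndef
          clear_value n
          have hrr2 : 2 ^ ((s + 1 + 1) - 1) = 2 * n := by
            rw [hndef]
            simp only [Nat.add_sub_cancel, pow_succ]
            ring
          rw [hrr2]
          have hne : (2 * K ^ 2 : ℝ) ≠ 0 := by positivity
          have e1 : (γ ^ 2 / (2 * K ^ 2)) ^ n = γ ^ (2 * n) / (2 * K ^ 2) ^ n := by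
            rw [div_pow, ← pow_mul]
          have e2 : (2 * K ^ 2) ^ (2 * n - 1)
              = (2 * K ^ 2) ^ n * (2 * K ^ 2) ^ (n - 1) := by
            rw [← pow_add]
            congr 1
            omega
          rw [e1, e2]
          field_simp


end SandersProof


set_option maxHeartbeats 2000000 in
theorem stmt13 : ∃ C : ℝ, 0 < C ∧
    ∀ (G : Type) [Group G] [DecidableEq G] (A : Finset G) (K : ℝ) (k : ℕ),
      A.Nonempty → 1 ≤ K → ((A * A).card : ℝ) ≤ K * A.card → 0 < k →
      ∃ S : Finset G, (1 : G) ∈ S ∧ S⁻¹ = S ∧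
        S ^ k ⊆ A * A * (A * A)⁻¹ ∧
        Real.exp (-(K ^ (C * k))) * A.card ≤ (S.card : ℝ) := by
  refine ⟨10, by norm_num, ?_⟩
  intro G _ _ A K k hA hK hAA hk
  have hA0 : (0 : ℝ) < A.card := by exact_mod_cast card_pos.2 hA
  have hK0 : (0 : ℝ) < K := lt_of_lt_of_le one_pos hK
  have hk1 : (1 : ℝ) ≤ (k : ℝ) := by exact_mod_cast hk
  set L := Real.log K with hL
  clear_value L
  have hL0 : (0 : ℝ) ≤ L := by rw [hL]; exact Real.log_nonneg hK
  set r₁ := Nat.floor (((k : ℝ) + 1) * L) with hr₁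
  clear_value r₁
  -- key: ((k)/(k+1))^(r₁+1) * K < 1
  have hq1 : (0 : ℝ) < (k : ℝ) / (k + 1) := by positivity
  have hexp : Real.exp (1 / ((k : ℝ) + 1)) ≤ 1 + 1 / (k : ℝ) := by
    have h1 : (0 : ℝ) < 1 - 1 / ((k : ℝ) + 1) := by
      rw [sub_pos, div_lt_one (by positivity)]
      linarith
    have h2 : 1 - 1 / ((k : ℝ) + 1) ≤ Real.exp (-(1 / ((k : ℝ) + 1))) := by
      have := Real.add_one_le_exp (-(1 / ((k : ℝ) + 1)))
      linarith
    have h3 : Real.exp (1 / ((k : ℝ) + 1)) ≤ 1 / (1 - 1 / ((k : ℝ) + 1)) := by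
      rw [le_div_iff₀ h1]
      calc Real.exp (1 / ((k : ℝ) + 1)) * (1 - 1 / ((k : ℝ) + 1))
          ≤ Real.exp (1 / ((k : ℝ) + 1)) * Real.exp (-(1 / ((k : ℝ) + 1))) := by
            exact mul_le_mul_of_nonneg_left h2 (le_of_lt (Real.exp_pos _))
        _ = 1 := by rw [← Real.exp_add]; simp
    have h4 : 1 / (1 - 1 / ((k : ℝ) + 1)) = 1 + 1 / (k : ℝ) := by
      have hk0 : (0 : ℝ) < (k : ℝ) := by linarith
      field_simp
      rw [add_sub_cancel_right, div_self (ne_of_gt hk0)]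
    linarith
  have hlog : 1 / ((k : ℝ) + 1) ≤ Real.log (1 + 1 / (k : ℝ)) := by
    rw [Real.le_log_iff_exp_le (by positivity)]
    exact hexp
  have hrL : L < ((r₁ : ℝ) + 1) * (1 / ((k : ℝ) + 1)) := by
    have h5 : ((k : ℝ) + 1) * L < r₁ + 1 := by
      rw [hr₁]; exact Nat.lt_floor_add_one _
    rw [mul_one_div, lt_div_iff₀ (by positivity)]
    linarith
  have hKlt : K < (1 + 1 / (k : ℝ)) ^ (r₁ + 1) := by
    have h6 : L < ((r₁ : ℝ) + 1) * Real.log (1 + 1 / (k : ℝ)) := by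
      calc L < ((r₁ : ℝ) + 1) * (1 / ((k : ℝ) + 1)) := hrL
        _ ≤ ((r₁ : ℝ) + 1) * Real.log (1 + 1 / (k : ℝ)) := by
            exact mul_le_mul_of_nonneg_left hlog (by positivity)
    have h7 : L < Real.log ((1 + 1 / (k : ℝ)) ^ (r₁ + 1)) := by
      rw [Real.log_pow]
      push_cast
      linarith
    have := Real.exp_lt_exp.2 h7
    rwa [hL, Real.exp_log hK0, Real.exp_log (by positivity)] at this
  have hqK : ((k : ℝ) / (k + 1)) ^ (r₁ + 1) * K < 1 := by
    have hprod : ((k : ℝ) / (k + 1)) * (1 + 1 / (k : ℝ)) = 1 := by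
      have hk0 : (0 : ℝ) < (k : ℝ) := by linarith
      field_simp
    have hpow : ((k : ℝ) / (k + 1)) ^ (r₁ + 1) * (1 + 1 / (k : ℝ)) ^ (r₁ + 1) = 1 := by
      rw [← mul_pow, hprod, one_pow]
    calc ((k : ℝ) / (k + 1)) ^ (r₁ + 1) * K
        < ((k : ℝ) / (k + 1)) ^ (r₁ + 1) * (1 + 1 / (k : ℝ)) ^ (r₁ + 1) :=
          mul_lt_mul_of_pos_left hKlt (pow_pos hq1 _)
      _ = 1 := hpow
  have hcond : ((k : ℝ) / (k + 1)) ^ (r₁ + 1) * ((A * A).card : ℝ) < A.card := by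
    calc ((k : ℝ) / (k + 1)) ^ (r₁ + 1) * ((A * A).card : ℝ)
        ≤ ((k : ℝ) / (k + 1)) ^ (r₁ + 1) * (K * A.card) :=
          mul_le_mul_of_nonneg_left hAA (le_of_lt (pow_pos hq1 _))
      _ = ((k : ℝ) / (k + 1)) ^ (r₁ + 1) * K * A.card := by ring
      _ < 1 * A.card := by exact mul_lt_mul_of_pos_right hqK hA0
      _ = A.card := one_mul _
  obtain ⟨S, h1S, hSinv, hSpow, hScard⟩ :=
    claim hA hK hAA hk (r₁ + 1) 1 one_pos le_rfl A subset_rfl hA (by rw [one_mul]) hcond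
  refine ⟨S, h1S, hSinv, hSpow, ?_⟩
  rw [Nat.add_sub_cancel, one_pow] at hScard
  -- now the numeric bound
  have hKrpow : K ^ ((10 : ℝ) * k) = Real.exp (10 * ((k : ℝ) * L)) := by
    rw [Real.rpow_def_of_pos hK0, ← hL]
    congr 1
    ring
  have hmain : 2 * (2 * K ^ 2) ^ (2 ^ r₁ - 1) ≤ Real.exp (K ^ ((10 : ℝ) * k)) := by
    rw [hKrpow]
    set y := (k : ℝ) * L with hy
    clear_value y
    have hy0 : 0 ≤ y := by rw [hy]; positivity
    rcases Nat.eq_zero_or_pos r₁ with h0 | hpos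
    · rw [h0]
      norm_num
      calc (2 : ℝ) ≤ Real.exp 1 := by
            have := Real.exp_one_gt_d9
            linarith
        _ ≤ Real.exp (Real.exp (10 * y)) := by
            rw [Real.exp_le_exp]
            calc (1 : ℝ) = Real.exp 0 := Real.exp_zero.symm
              _ ≤ Real.exp (10 * y) := by
                  rw [Real.exp_le_exp]
                  positivity
    · -- r₁ ≥ 1, so y ≥ 1/2
      have h1y : (1 : ℝ) ≤ 2 * y := by
        have h8 : (1 : ℝ) ≤ ((k : ℝ) + 1) * L := by
          rw [hr₁] at hpos
          exact_mod_cast Nat.floor_pos.1 hpos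
        have h9 : ((k : ℝ) + 1) * L ≤ 2 * y := by rw [hy]; nlinarith
        linarith
      have hr1y : (r₁ : ℝ) ≤ 2 * y := by
        have h10 : (r₁ : ℝ) ≤ ((k : ℝ) + 1) * L := by
          rw [hr₁]; exact Nat.floor_le (by positivity)
        have h9 : ((k : ℝ) + 1) * L ≤ 2 * y := by rw [hy]; nlinarith
        linarith
      have hEbound : ((2 : ℝ) ^ r₁ : ℝ) ≤ Real.exp (2 * y) := by
        calc ((2 : ℝ) ^ r₁ : ℝ) ≤ Real.exp 1 ^ r₁ := by
              apply pow_le_pow_left₀ (by norm_num)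
              have := Real.exp_one_gt_d9
              linarith
          _ = Real.exp r₁ := by rw [← Real.exp_nat_mul]; ring_nf
          _ ≤ Real.exp (2 * y) := by rw [Real.exp_le_exp]; exact hr1y
      have hlogb : Real.log (2 * K ^ 2) ≤ Real.exp (2 * y) := by
        have h11 : Real.log (2 * K ^ 2) = Real.log 2 + 2 * L := by
          rw [Real.log_mul (by norm_num) (by positivity), Real.log_pow, ← hL]
          push_cast
          ring
        have h12 : Real.log 2 ≤ 1 := by
          have := Real.log_two_lt_d9
          linarith
        have h13 : L ≤ y := by rw [hy]; nlinarith
        have h14 : Real.log (2 * K ^ 2) ≤ 1 + 2 * y := by rw [h11]; linarith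
        have h15 : 1 + 2 * y ≤ Real.exp (2 * y) := by
          have := Real.add_one_le_exp (2 * y)
          linarith
        linarith
      have hlogpos : 0 ≤ Real.log (2 * K ^ 2) := by
        apply Real.log_nonneg
        nlinarith
      have hpow1 : (2 * K ^ 2) ^ (2 ^ r₁ - 1) ≤ (2 * K ^ 2) ^ (2 ^ r₁ : ℕ) := by
        apply pow_le_pow_right₀ (by nlinarith)
        exact Nat.sub_le _ _
      have hpow2 : ((2 * K ^ 2) ^ (2 ^ r₁ : ℕ) : ℝ)
          = Real.exp ((2 ^ r₁ : ℕ) * Real.log (2 * K ^ 2)) := by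
        rw [Real.exp_nat_mul, Real.exp_log (by nlinarith)]
      have hpow3 : ((2 ^ r₁ : ℕ) : ℝ) * Real.log (2 * K ^ 2)
          ≤ Real.exp (2 * y) * Real.exp (2 * y) := by
        apply mul_le_mul ?_ hlogb hlogpos (le_of_lt (Real.exp_pos _))
        · push_cast
          exact hEbound
      have hpow4 : Real.exp (2 * y) * Real.exp (2 * y) = Real.exp (4 * y) := by
        rw [← Real.exp_add]
        ring_nf
      have hLHS : 2 * (2 * K ^ 2) ^ (2 ^ r₁ - 1) ≤ 2 * Real.exp (Real.exp (4 * y)) := by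
        have := hpow1.trans (le_of_eq hpow2)
        have h16 : (2 * K ^ 2) ^ (2 ^ r₁ - 1) ≤ Real.exp (Real.exp (4 * y)) := by
          calc (2 * K ^ 2) ^ (2 ^ r₁ - 1) ≤ Real.exp ((2 ^ r₁ : ℕ) * Real.log (2 * K ^ 2)) := this
            _ ≤ Real.exp (Real.exp (4 * y)) := by
                rw [Real.exp_le_exp]
                calc ((2 ^ r₁ : ℕ) : ℝ) * Real.log (2 * K ^ 2)
                    ≤ Real.exp (2 * y) * Real.exp (2 * y) := hpow3
                  _ = Real.exp (4 * y) := hpow4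
        linarith
      have hfinal : 2 * Real.exp (Real.exp (4 * y)) ≤ Real.exp (Real.exp (10 * y)) := by
        have h17 : Real.exp (4 * y) + 1 ≤ Real.exp (10 * y) := by
          have h18 : Real.exp (10 * y) = Real.exp (4 * y) * Real.exp (6 * y) := by
            rw [← Real.exp_add]; ring_nf
          have h19 : (2 : ℝ) ≤ Real.exp (6 * y) := by
            calc (2 : ℝ) ≤ Real.exp 1 := by
                  have := Real.exp_one_gt_d9; linarith
              _ ≤ Real.exp (6 * y) := by rw [Real.exp_le_exp]; linarith
          have h20 : (1 : ℝ) ≤ Real.exp (4 * y) := by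
            rw [show (1 : ℝ) = Real.exp 0 from Real.exp_zero.symm, Real.exp_le_exp]
            positivity
          nlinarith [Real.exp_pos (4 * y)]
        calc 2 * Real.exp (Real.exp (4 * y))
            ≤ Real.exp 1 * Real.exp (Real.exp (4 * y)) := by
              have := Real.exp_one_gt_d9
              have := Real.exp_pos (Real.exp (4 * y))
              nlinarith
          _ = Real.exp (Real.exp (4 * y) + 1) := by rw [← Real.exp_add]; ring_nf
          _ ≤ Real.exp (Real.exp (10 * y)) := by rw [Real.exp_le_exp]; exact h17
      linarith
  -- conclude
  have hden : (0 : ℝ) < 2 * (2 * K ^ 2) ^ (2 ^ r₁ - 1) := by positivity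
  have hexple : Real.exp (-(K ^ ((10 : ℝ) * k))) ≤ 1 / (2 * (2 * K ^ 2) ^ (2 ^ r₁ - 1)) := by
    rw [Real.exp_neg, one_div]
    exact inv_anti₀ hden hmain
  calc Real.exp (-(K ^ ((10 : ℝ) * k))) * A.card
      ≤ 1 / (2 * (2 * K ^ 2) ^ (2 ^ r₁ - 1)) * A.card :=
        mul_le_mul_of_nonneg_right hexple (le_of_lt hA0)
    _ = A.card / (2 * (2 * K ^ 2) ^ (2 ^ r₁ - 1)) := by ring
    _ ≤ (S.card : ℝ) := by
        rw [div_eq_mul_inv] at hScard ⊢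
        convert hScard using 2
        ring
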